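/- Let f : N → P be a smooth map between closed n- and p-manifolds, and suppose the germ of f at x, in suitable coordinates on ℝ^{n+1} and ℝ^{p+1} of the stabilized map f × id_ℝ, is z = j₀^k g with g not in Σ^{n+1}(n+1,p+1). Then there exist coordinate hyperplanes V ⊂ ℝ^{n+1}, W ⊂ ℝ^{p+1} and a restricted germ f̄ : (ℝ^n,0) → (ℝ^p,0) such that the local algebras satisfy Q(z) ≅ Q(j₀^k f̄). -/

import Mathlib

/-!
STATEMENT 17.  Let `z = j₀^k g` be the `k`-jet of a (stabilized) map germ
`g : (ℝ^{n+1},0) → (ℝ^{p+1},0)` not lying in `Σ^{n+1}(n+1,p+1)` (i.e., with nonzero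
differential at the origin).  Then there is a germ `f̄ : (ℝ^n,0) → (ℝ^p,0)` in one
lower dimension whose local algebras agree: `Q(z) ≅ Q(j₀^k f̄)`.

Jets are represented by tuples of polynomials with zero constant coefficient, and
`Q(z) = ℝ[x]/((components of z) + 𝔪^{k+1})`.
-/

noncomputable section
open MvPolynomial

/-- The maximal ideal `𝔪_m = (x₁,…,x_m)` of `ℝ[x₁,…,x_m]`. -/
def mIdeal (m : ℕ) : Ideal (MvPolynomial (Fin m) ℝ) :=
  Ideal.span (Set.range MvPolynomial.X)

/-- The ideal `(f₁,…,f_q) + 𝔪_m^{k+1}` of a `k`-jet. -/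
def jetIdeal (m q k : ℕ) (f : Fin q → MvPolynomial (Fin m) ℝ) :
    Ideal (MvPolynomial (Fin m) ℝ) :=
  Ideal.span (Set.range f) ⊔ (mIdeal m) ^ (k + 1)

/-- The local algebra `Q(z) = ℝ[x₁,…,x_m]/((f₁,…,f_q) + 𝔪_m^{k+1})` of a `k`-jet. -/
abbrev JetAlgebra (m q k : ℕ) (f : Fin q → MvPolynomial (Fin m) ℝ) : Type :=
  MvPolynomial (Fin m) ℝ ⧸ jetIdeal m q k f



lemma X_mem_mIdeal {m : ℕ} (i : Fin m) : (X i : MvPolynomial (Fin m) ℝ) ∈ mIdeal m :=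
  Ideal.subset_span ⟨i, rfl⟩

lemma monomial_mem_pow {m : ℕ} (d : Fin m →₀ ℕ) (c : ℝ) :
    monomial d c ∈ mIdeal m ^ (d.sum fun _ e => e) := by
  induction d using Finsupp.induction with
  | zero => simp
  | single_add a e f ha he ih =>
    have hsum : ((Finsupp.single a e + f).sum fun _ e => e) = e + f.sum fun _ e => e := by
      rw [Finsupp.sum_add_index'] <;> simp
    have : monomial (Finsupp.single a e + f) c = X a ^ e * monomial f c := by
      rw [X_pow_eq_monomial, monomial_mul, one_mul]
    rw [hsum, this, pow_add]
    exact Ideal.mul_mem_mul (Ideal.pow_mem_pow (X_mem_mIdeal a) e) ih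

lemma mem_pow_mIdeal {m s : ℕ} {p : MvPolynomial (Fin m) ℝ}
    (h : ∀ d ∈ p.support, s ≤ d.sum fun _ e => e) : p ∈ mIdeal m ^ s := by
  rw [p.as_sum]
  refine Submodule.sum_mem _ fun d hd => ?_
  exact Ideal.pow_le_pow_right (h d hd) (monomial_mem_pow d _)

lemma mem_mIdeal_of_constantCoeff {m : ℕ} {p : MvPolynomial (Fin m) ℝ}
    (h : constantCoeff p = 0) : p ∈ mIdeal m := by
  have := mem_pow_mIdeal (m := m) (s := 1) (p := p) ?_
  · simpa using this
  · intro d hd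
    rcases Nat.eq_zero_or_pos (d.sum fun _ e => e) with h0 | h0
    · exfalso
      have hd0 : d = 0 := by
        ext i
        by_contra hi
        have hmem : i ∈ d.support := Finsupp.mem_support_iff.2 hi
        exact hi (Finset.sum_eq_zero_iff.1 h0 i hmem)
      rw [mem_support_iff, hd0] at hd
      exact hd h
    · exact h0


/-- degree≤1 part removal lands in the square of the maximal ideal -/
lemma sub_linear_mem_sq {m : ℕ} {p : MvPolynomial (Fin m) ℝ}
    (h0 : constantCoeff p = 0) :
    p - ∑ i, C (coeff (Finsupp.single i 1) p) * X i ∈ mIdeal m ^ 2 := by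
  apply mem_pow_mIdeal
  intro d hd
  by_contra hlt
  push_neg at hlt
  interval_cases hs : (d.sum fun _ e => e)
  · -- degree 0
    have hd0 : d = 0 := by
      ext i
      by_contra hi
      exact hi (Finset.sum_eq_zero_iff.1 hs i (Finsupp.mem_support_iff.2 hi))
    apply mem_support_iff.1 hd
    rw [hd0]
    simp [coeff_sub, coeff_sum, coeff_C_mul, coeff_X', ← constantCoeff_eq, h0,
      Finsupp.single_eq_zero]
  · -- degree 1
    have hone : ∀ i ∈ d.support, 1 ≤ d i := fun i hi =>
      Nat.one_le_iff_ne_zero.2 (Finsupp.mem_support_iff.1 hi)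
    have hcard : d.support.card ≤ 1 := by
      calc d.support.card = ∑ _i ∈ d.support, 1 := by simp
      _ ≤ ∑ i ∈ d.support, d i := Finset.sum_le_sum hone
      _ = 1 := hs
    have hne : d.support.Nonempty := by
      by_contra hn
      rw [Finset.not_nonempty_iff_eq_empty] at hn
      have : (d.sum fun _ e => e) = 0 := by rw [Finsupp.sum, hn, Finset.sum_empty]
      omega
    have hcard1 : d.support.card = 1 := le_antisymm hcard (Finset.Nonempty.card_pos hne)
    obtain ⟨a, ha, hda⟩ := Finsupp.card_support_eq_one.1 hcard1
    have hda1 : d a = 1 := by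
      have : (d.sum fun _ e => e) = d a := by
        rw [Finsupp.sum, hda]
        simp [Finsupp.support_single_ne_zero _ ha]
      omega
    have hd1 : d = Finsupp.single a 1 := by rw [hda, hda1]
    apply mem_support_iff.1 hd
    rw [hd1]
    rw [coeff_sub, coeff_sum]
    simp only [coeff_C_mul, coeff_X']
    rw [Finset.sum_eq_single a]
    · simp
    · intro b _ hb
      have : ¬ (Finsupp.single b 1 = Finsupp.single a (1:ℕ)) := by
        simp [Finsupp.single_left_inj, hb]
      simp [this]
    · simp



variable {A : Type} [CommRing A] [Algebra ℝ A]

/-- coarse substitution difference -/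
lemma aeval_sub_mem_span {M : ℕ} {j : Fin M} {v w : Fin M → A}
    (hvw : ∀ i, i ≠ j → v i = w i) (h : MvPolynomial (Fin M) ℝ) :
    aeval v h - aeval w h ∈ Ideal.span {v j - w j} := by
  induction h using MvPolynomial.induction_on with
  | C c => simp
  | add q r hq hr =>
    rw [map_add, map_add]
    have : aeval v q + aeval v r - (aeval w q + aeval w r)
        = (aeval v q - aeval w q) + (aeval v r - aeval w r) := by ring
    rw [this]; exact Ideal.add_mem _ hq hr
  | mul_X q i hq =>
    rw [map_mul, map_mul, aeval_X, aeval_X]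
    have : aeval v q * v i - aeval w q * w i
        = (aeval v q - aeval w q) * v i + aeval w q * (v i - w i) := by ring
    rw [this]
    refine Ideal.add_mem _ (Ideal.mul_mem_right _ _ hq) ?_
    by_cases hij : i = j
    · subst hij
      exact Ideal.mul_mem_left _ _ (Ideal.subset_span rfl)
    · rw [hvw i hij, sub_self, mul_zero]; exact Ideal.zero_mem _

/-- aeval with values in I maps 𝔪^s into I^s -/
lemma aeval_mem_pow {M s : ℕ} {v : Fin M → A} {I : Ideal A}
    (hv : ∀ i, v i ∈ I) {b : MvPolynomial (Fin M) ℝ} (hb : b ∈ mIdeal M ^ s) :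
    aeval v b ∈ I ^ s := by
  have h1 : Ideal.map (aeval v) (mIdeal M ^ s) ≤ I ^ s := by
    rw [Ideal.map_pow]
    apply Ideal.pow_right_mono
    rw [show mIdeal M = Ideal.span (Set.range MvPolynomial.X) from rfl, Ideal.map_span,
      Ideal.span_le]
    rintro x ⟨y, ⟨i, rfl⟩, rfl⟩
    simpa using hv i
  exact h1 (Ideal.mem_map_of_mem _ hb)

/-- refined substitution difference for quadratic part -/
lemma aeval_sub_mem_span_mul {M : ℕ} {j : Fin M} {v w : Fin M → A} {I : Ideal A}
    (hvw : ∀ i, i ≠ j → v i = w i) (hv : ∀ i, v i ∈ I) (hw : ∀ i, w i ∈ I)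
    {h : MvPolynomial (Fin M) ℝ} (hh : h ∈ mIdeal M ^ 2) :
    aeval v h - aeval w h ∈ Ideal.span {v j - w j} * I := by
  rw [pow_two] at hh
  refine Submodule.mul_induction_on hh ?_ ?_
  · intro a ha b hb
    rw [map_mul, map_mul]
    have : aeval v a * aeval v b - aeval w a * aeval w b
        = (aeval v a - aeval w a) * aeval v b + aeval w a * (aeval v b - aeval w b) := by ring
    rw [this]
    refine Ideal.add_mem _ ?_ ?_
    · exact Ideal.mul_mem_mul (aeval_sub_mem_span hvw a)
        (by simpa using aeval_mem_pow (s := 1) hv (by simpa using hb))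
    · rw [mul_comm (Ideal.span _) I]
      exact Ideal.mul_mem_mul (by simpa using aeval_mem_pow (s := 1) hw (by simpa using ha))
        (aeval_sub_mem_span hvw b)
  · intro x y hx hy
    have : ∀ (q r : MvPolynomial (Fin M) ℝ), aeval v (q + r) - aeval w (q + r)
        = (aeval v q - aeval w q) + (aeval v r - aeval w r) := by
      intro q r; rw [map_add, map_add]; ring
    rw [this]; exact Ideal.add_mem _ hx hy

/-- constantCoeff is preserved by aeval with constant-free values -/
lemma constantCoeff_aeval {M N : ℕ} {v : Fin M → MvPolynomial (Fin N) ℝ}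
    (hv : ∀ i, constantCoeff (v i) = 0) (h : MvPolynomial (Fin M) ℝ) :
    constantCoeff (aeval v h) = constantCoeff h := by
  induction h using MvPolynomial.induction_on with
  | C c => simp
  | add q r hq hr => rw [map_add, map_add, hq, hr, map_add]
  | mul_X q i hq => 
    rw [map_mul, map_mul, aeval_X, map_mul, hq, hv i, constantCoeff_X, mul_zero]


lemma insertNth_forall {M : ℕ} (j : Fin (M+1)) {α : Type*} {t : α} {vv : Fin M → α}
    {P : α → Prop} (ht : P t) (hvv : ∀ m, P (vv m)) : ∀ i, P (j.insertNth (α := fun _ => α) t vv i) := by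
  intro i
  rcases eq_or_ne i j with rfl | hij
  · simpa using ht
  · obtain ⟨m, rfl⟩ := Fin.exists_succAbove_eq hij
    simpa using hvv m

/-- KEY: first-order expansion of a substitution difference. -/
lemma key_expansion {M : ℕ} (j : Fin (M+1)) {A : Type} [CommRing A] [Algebra ℝ A] {I : Ideal A}
    {vv : Fin M → A} (hvv : ∀ m, vv m ∈ I) {t u : A} (ht : t ∈ I) (hu : u ∈ I)
    {g1 : MvPolynomial (Fin (M+1)) ℝ} (h0 : constantCoeff g1 = 0) :
    aeval (j.insertNth (α := fun _ => _) t vv) g1 - aeval (j.insertNth (α := fun _ => _) u vv) g1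
      - (coeff (Finsupp.single j 1) g1) • (t - u) ∈ Ideal.span {t - u} * I := by
  set L : MvPolynomial (Fin (M+1)) ℝ := ∑ i, C (coeff (Finsupp.single i 1) g1) * X i with hL
  have hq : g1 - L ∈ mIdeal (M+1) ^ 2 := sub_linear_mem_sq h0
  have hvw : ∀ i, i ≠ j → j.insertNth (α := fun _ => _) t vv i = j.insertNth (α := fun _ => _) u vv i := by
    intro i hij
    obtain ⟨m, rfl⟩ := Fin.exists_succAbove_eq hij
    rw [Fin.insertNth_apply_succAbove, Fin.insertNth_apply_succAbove]
  have hv : ∀ i, j.insertNth (α := fun _ => _) t vv i ∈ I := insertNth_forall j ht hvv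
  have hw : ∀ i, j.insertNth (α := fun _ => _) u vv i ∈ I := insertNth_forall j hu hvv
  have hmain := aeval_sub_mem_span_mul (A := A) hvw hv hw hq
  rw [Fin.insertNth_apply_same, Fin.insertNth_apply_same] at hmain
  have hlin : ∀ (x : A) (f : Fin M → A),
      aeval (j.insertNth (α := fun _ => _) x f) L
        = (coeff (Finsupp.single j 1) g1) • x
          + ∑ m, (coeff (Finsupp.single (j.succAbove m) 1) g1) • f m := by
    intro x f
    rw [hL, map_sum]
    rw [Fin.sum_univ_succAbove
      (fun i => aeval (j.insertNth (α := fun _ => _) x f) (C (coeff (Finsupp.single i 1) g1) * X i)) j]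
    congr 1
    · rw [map_mul, aeval_C, aeval_X, Fin.insertNth_apply_same, Algebra.smul_def]
    · apply Finset.sum_congr rfl
      intro m _
      rw [map_mul, aeval_C, aeval_X, Fin.insertNth_apply_succAbove, Algebra.smul_def]
  have hsplit : aeval (j.insertNth (α := fun _ => _) t vv) g1 - aeval (j.insertNth (α := fun _ => _) u vv) g1
      - (coeff (Finsupp.single j 1) g1) • (t - u)
      = aeval (j.insertNth (α := fun _ => _) t vv) (g1 - L) - aeval (j.insertNth (α := fun _ => _) u vv) (g1 - L) := by
    rw [map_sub, map_sub, hlin t vv, hlin u vv, smul_sub]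
    ring
  rw [hsplit]
  exact hmain

/-- Newton iteration producing the implicit function ψ. -/
lemma newton {n : ℕ} (j : Fin (n+1)) {g1 : MvPolynomial (Fin (n+1)) ℝ}
    (h0 : constantCoeff g1 = 0) (hc0 : coeff (Finsupp.single j 1) g1 ≠ 0)
    (s : ℕ) : ∃ ψ : MvPolynomial (Fin n) ℝ, constantCoeff ψ = 0 ∧
      aeval (j.insertNth (α := fun _ => _) ψ X) g1 ∈ mIdeal n ^ s := by
  set c := coeff (Finsupp.single j 1) g1 with hc
  induction s with
  | zero => exact ⟨0, map_zero _, by simp⟩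
  | succ s ih =>
    obtain ⟨ψ, hψ0, hψ⟩ := ih
    set e := aeval (j.insertNth (α := fun _ => _) ψ X) g1 with he
    have h1 : constantCoeff e = 0 := by
      rw [he, constantCoeff_aeval (insertNth_forall (P := fun q => constantCoeff q = 0) j hψ0 (fun m => by simp)) g1, h0]
    have hψ'0 : constantCoeff (ψ - c⁻¹ • e) = 0 := by
      rw [map_sub, hψ0, smul_eq_C_mul, map_mul, constantCoeff_C, h1, mul_zero, sub_zero]
    refine ⟨ψ - c⁻¹ • e, hψ'0, ?_⟩
    have hXm : ∀ m : Fin n, (X m : MvPolynomial (Fin n) ℝ) ∈ mIdeal n :=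
      fun m => Ideal.subset_span ⟨m, rfl⟩
    have hψm : ψ ∈ mIdeal n := mem_mIdeal_of_constantCoeff hψ0
    have hψ'm : ψ - c⁻¹ • e ∈ mIdeal n := mem_mIdeal_of_constantCoeff hψ'0
    have hkey := key_expansion j (I := mIdeal n) hXm hψ'm hψm h0
    rw [← hc, ← he] at hkey
    have hdiff : (ψ - c⁻¹ • e) - ψ = -(c⁻¹ • e) := by ring
    rw [hdiff] at hkey
    have hcs : c • -(c⁻¹ • e) = -e := by
      rw [smul_neg, smul_smul, mul_inv_cancel₀ hc0, one_smul]
    rw [hcs] at hkey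
    have hre : aeval (j.insertNth (α := fun _ => _) (ψ - c⁻¹ • e) X) g1
        = aeval (j.insertNth (α := fun _ => _) (ψ - c⁻¹ • e) X) g1 - e - -e := by ring
    rw [hre]
    have hspan : Ideal.span {-(c⁻¹ • e)} * mIdeal n ≤ mIdeal n ^ (s+1) := by
      rw [pow_succ]
      apply Ideal.mul_mono_left
      rw [Ideal.span_singleton_le_iff_mem]
      refine Submodule.neg_mem _ ?_
      rw [smul_eq_C_mul]
      exact Ideal.mul_mem_left _ _ hψ
    exact hspan hkey

/-- If the jet `z` of `g : (ℝ^{n+1},0) → (ℝ^{p+1},0)` has nonzero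
differential at `0` (is not in `Σ^{n+1}`), then after restricting to suitable
coordinate hyperplanes there is a germ `f̄ : (ℝ^n,0) → (ℝ^p,0)` with
`Q(z) ≅ Q(j₀^k f̄)` as `ℝ`-algebras. -/
theorem exists_lower_dimensional_jet_with_isomorphic_local_algebra
    (n p k : ℕ) (g : Fin (p + 1) → MvPolynomial (Fin (n + 1)) ℝ)
    (hg0 : ∀ i, MvPolynomial.constantCoeff (g i) = 0)
    (hreg : ∃ (i : Fin (p + 1)) (j : Fin (n + 1)),
      MvPolynomial.coeff (Finsupp.single j 1) (g i) ≠ 0) :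
    ∃ fbar : Fin p → MvPolynomial (Fin n) ℝ,
      (∀ i, MvPolynomial.constantCoeff (fbar i) = 0) ∧
      Nonempty (JetAlgebra (n + 1) (p + 1) k g ≃ₐ[ℝ] JetAlgebra n p k fbar) := by
  classical
  obtain ⟨i₀, j, hc0⟩ := hreg
  set c := coeff (Finsupp.single j 1) (g i₀) with hcdef
  obtain ⟨ψ, hψ0, hψk⟩ := newton j (hg0 i₀) hc0 (k + 1)
  -- the two substitution algebra homomorphisms
  set E : MvPolynomial (Fin (n+1)) ℝ →ₐ[ℝ] MvPolynomial (Fin n) ℝ :=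
    aeval (j.insertNth (α := fun _ => _) ψ X) with hE
  set S : MvPolynomial (Fin n) ℝ →ₐ[ℝ] MvPolynomial (Fin (n+1)) ℝ :=
    aeval (fun m => X (j.succAbove m)) with hS
  set vv : Fin n → MvPolynomial (Fin (n+1)) ℝ := fun m => X (j.succAbove m) with hvv
  have hv0 : ∀ i, constantCoeff (j.insertNth (α := fun _ => _) ψ X i) = 0 :=
    insertNth_forall (P := fun q => constantCoeff q = 0) j hψ0 (fun m => by simp)
  have hv0' : ∀ i, (j.insertNth (α := fun _ => _) ψ X i) ∈ mIdeal n :=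
    fun i => mem_mIdeal_of_constantCoeff (hv0 i)
  have hXmem : ∀ i : Fin (n+1), (X i : MvPolynomial (Fin (n+1)) ℝ) ∈ mIdeal (n+1) :=
    fun i => Ideal.subset_span ⟨i, rfl⟩
  have hSψ0 : constantCoeff (S ψ) = 0 := by
    rw [hS, constantCoeff_aeval (fun m => by simp [hvv]) ψ, hψ0]
  have hSψm : S ψ ∈ mIdeal (n+1) := mem_mIdeal_of_constantCoeff hSψ0
  -- fbar
  refine ⟨fun m => E (g (i₀.succAbove m)), fun m => by
    rw [hE, constantCoeff_aeval hv0 (g (i₀.succAbove m)), hg0], ?_⟩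
  set fbar : Fin p → MvPolynomial (Fin n) ℝ := fun m => E (g (i₀.succAbove m)) with hfbar
  set J := jetIdeal (n+1) (p+1) k g with hJ
  set I₀ := jetIdeal n p k fbar with hI₀
  -- identification of compositions
  have hins : (j.insertNth (α := fun _ => _) (X j) vv) = X := by
    funext i
    rcases eq_or_ne i j with rfl | hij
    · simp
    · obtain ⟨m, rfl⟩ := Fin.exists_succAbove_eq hij
      simp [hvv]
  have hTE : (S.comp E) = aeval (j.insertNth (α := fun _ => _) (S ψ) vv) := by
    apply MvPolynomial.algHom_ext
    intro i
    rcases eq_or_ne i j with rfl | hij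
    · rw [AlgHom.comp_apply, hE, aeval_X, Fin.insertNth_apply_same, aeval_X,
        Fin.insertNth_apply_same]
    · obtain ⟨m, rfl⟩ := Fin.exists_succAbove_eq hij
      rw [AlgHom.comp_apply, hE, aeval_X, Fin.insertNth_apply_succAbove, hS, aeval_X,
        aeval_X, Fin.insertNth_apply_succAbove]
  have hES : E.comp S = AlgHom.id ℝ (MvPolynomial (Fin n) ℝ) := by
    apply MvPolynomial.algHom_ext
    intro m
    rw [AlgHom.comp_apply, hS, aeval_X, hE, aeval_X, Fin.insertNth_apply_succAbove,
      AlgHom.id_apply]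
  -- the fundamental element d
  set d : MvPolynomial (Fin (n+1)) ℝ := X j - S ψ with hd
  -- for every h, h - S (E h) lies in span {d}
  have hsub : ∀ h : MvPolynomial (Fin (n+1)) ℝ, h - S (E h) ∈ Ideal.span {d} := by
    intro h
    have := aeval_sub_mem_span (A := MvPolynomial (Fin (n+1)) ℝ) (j := j)
      (v := X) (w := j.insertNth (α := fun _ => _) (S ψ) vv) ?_ h
    · rw [aeval_X_left_apply, ← hTE] at this
      have hj : (X j : MvPolynomial (Fin (n+1)) ℝ)
          - (j.insertNth (α := fun _ => _) (S ψ) vv) j = d := by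
        rw [Fin.insertNth_apply_same, hd]
      rw [hj] at this
      exact this
    · intro i hij
      obtain ⟨m, rfl⟩ := Fin.exists_succAbove_eq hij
      rw [Fin.insertNth_apply_succAbove]
  -- membership of E (g i₀) in the (k+1)-st power, transported by S
  have hSE : S (E (g i₀)) ∈ mIdeal (n+1) ^ (k+1) := by
    apply aeval_mem_pow (v := fun m => X (j.succAbove m)) (fun m => hXmem _)
    exact hψk
  have hg1J : g i₀ ∈ J := by
    rw [hJ, jetIdeal]
    exact Submodule.mem_sup_left (Ideal.subset_span ⟨i₀, rfl⟩)
  have hpowJ : mIdeal (n+1) ^ (k+1) ≤ J := le_sup_right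
  -- key expansion gives d ∈ J
  have hdJ : d ∈ J := by
    have hkey := key_expansion (M := n) j (I := mIdeal (n+1))
      (vv := vv) (fun m => hXmem _) (hXmem j) hSψm (hg0 i₀)
    rw [hins, aeval_X_left_apply, ← hTE] at hkey
    rw [← hcdef, ← hd, AlgHom.comp_apply] at hkey
    obtain ⟨B, hBm, hdB⟩ := Ideal.mem_span_singleton_mul.1 hkey
    set β : MvPolynomial (Fin (n+1)) ℝ := -(c⁻¹ • B) with hβ
    have hβm : β ∈ mIdeal (n+1) := by
      rw [hβ]
      refine Submodule.neg_mem _ ?_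
      rw [smul_eq_C_mul]
      exact Ideal.mul_mem_left _ _ hBm
    have hd1 : d * (1 - β) = c⁻¹ • (g i₀ - S (E (g i₀))) := by
      have hc' : c⁻¹ * c = 1 := inv_mul_cancel₀ hc0
      rw [hβ, smul_eq_C_mul, smul_eq_C_mul]
      have hdB' : d * B = g i₀ - S (E (g i₀)) - c • d := hdB
      rw [smul_eq_C_mul] at hdB'
      have hcc : (C (c⁻¹) * C c : MvPolynomial (Fin (n+1)) ℝ) = 1 := by
        rw [← C_mul, hc', C_1]
      linear_combination C (c⁻¹) * hdB' - d * hcc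
    have hd1J : d * (1 - β) ∈ J := by
      rw [hd1, smul_eq_C_mul]
      refine Ideal.mul_mem_left _ _ (Ideal.sub_mem _ hg1J (hpowJ hSE))
    have hgeom := geom_sum_mul β (k+1)
    have hdecomp : d = d * β ^ (k+1)
        + (d * (1 - β)) * (∑ i ∈ Finset.range (k+1), β ^ i) := by
      linear_combination d * hgeom
    rw [hdecomp]
    refine Ideal.add_mem _ ?_ (Ideal.mul_mem_right _ _ hd1J)
    exact Ideal.mul_mem_left _ _ (hpowJ (Ideal.pow_mem_pow hβm (k+1)))
  have hspanJ : Ideal.span {d} ≤ J := (Ideal.span_singleton_le_iff_mem J).2 hdJ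
  -- E maps J into I₀
  have hEJ : ∀ a ∈ J, E a ∈ I₀ := by
    intro a ha
    rw [hJ, jetIdeal] at ha
    have : J ≤ Ideal.comap E.toRingHom I₀ := by
      rw [hJ, jetIdeal]
      apply sup_le
      · rw [Ideal.span_le]
        rintro x ⟨i, rfl⟩
        rcases eq_or_ne i i₀ with rfl | hne
        · exact Ideal.mem_comap.2 (Submodule.mem_sup_right hψk)
        · obtain ⟨m, rfl⟩ := Fin.exists_succAbove_eq hne
          exact Ideal.mem_comap.2 (Submodule.mem_sup_left (Ideal.subset_span ⟨m, rfl⟩))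
      · intro x hx
        exact Ideal.mem_comap.2 (Submodule.mem_sup_right (aeval_mem_pow hv0' hx))
    exact this (by rw [hJ, jetIdeal]; exact ha)
  -- S maps I₀ into J
  have hSI : ∀ a ∈ I₀, S a ∈ J := by
    intro a ha
    have : I₀ ≤ Ideal.comap S.toRingHom J := by
      rw [hI₀, jetIdeal]
      apply sup_le
      · rw [Ideal.span_le]
        rintro x ⟨m, rfl⟩
        refine Ideal.mem_comap.2 ?_
        show S (fbar m) ∈ J
        have h1 : S (fbar m) = g (i₀.succAbove m)
            - (g (i₀.succAbove m) - S (E (g (i₀.succAbove m)))) := by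
          rw [hfbar]; ring
        rw [h1]
        refine Ideal.sub_mem _ ?_ (hspanJ (hsub _))
        rw [hJ, jetIdeal]
        exact Submodule.mem_sup_left (Ideal.subset_span ⟨i₀.succAbove m, rfl⟩)
      · intro x hx
        refine Ideal.mem_comap.2 (hpowJ ?_)
        exact aeval_mem_pow (fun m => hXmem _) hx
    exact this ha
  -- the two induced maps on quotients
  set Φ : JetAlgebra (n+1) (p+1) k g →ₐ[ℝ] JetAlgebra n p k fbar :=
    Ideal.Quotient.liftₐ J ((Ideal.Quotient.mkₐ ℝ I₀).comp E)
      (fun a ha => by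
        simp only [AlgHom.comp_apply, Ideal.Quotient.mkₐ_eq_mk]
        exact Ideal.Quotient.eq_zero_iff_mem.2 (hEJ a ha)) with hΦ
  set Ψ : JetAlgebra n p k fbar →ₐ[ℝ] JetAlgebra (n+1) (p+1) k g :=
    Ideal.Quotient.liftₐ I₀ ((Ideal.Quotient.mkₐ ℝ J).comp S)
      (fun a ha => by
        simp only [AlgHom.comp_apply, Ideal.Quotient.mkₐ_eq_mk]
        exact Ideal.Quotient.eq_zero_iff_mem.2 (hSI a ha)) with hΨ
  have hΦmk : ∀ h, Φ (Ideal.Quotient.mk J h) = Ideal.Quotient.mk I₀ (E h) := by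
    intro h
    rw [hΦ, Ideal.Quotient.liftₐ_apply]
    erw [Ideal.Quotient.lift_mk]
  have hΨmk : ∀ u, Ψ (Ideal.Quotient.mk I₀ u) = Ideal.Quotient.mk J (S u) := by
    intro u
    rw [hΨ, Ideal.Quotient.liftₐ_apply]
    erw [Ideal.Quotient.lift_mk]
  refine ⟨AlgEquiv.ofAlgHom Φ Ψ ?_ ?_⟩
  · apply AlgHom.ext
    intro x
    obtain ⟨u, rfl⟩ := Ideal.Quotient.mkₐ_surjective ℝ I₀ x
    rw [Ideal.Quotient.mkₐ_eq_mk, AlgHom.comp_apply, hΨmk, hΦmk, AlgHom.id_apply]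
    have : E (S u) = u := by
      have := congrArg (fun f => f u) (congrArg (fun f => f.toFun) hES)
      simpa using AlgHom.congr_fun hES u
    rw [this]
  · apply AlgHom.ext
    intro x
    obtain ⟨h, rfl⟩ := Ideal.Quotient.mkₐ_surjective ℝ J x
    rw [Ideal.Quotient.mkₐ_eq_mk, AlgHom.comp_apply, hΦmk, hΨmk, AlgHom.id_apply]
    rw [Ideal.Quotient.eq, ← neg_sub h (S (E h))]
    exact J.neg_mem (hspanJ (hsub h))
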